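/- arXiv:0802.1347 — 2 statements merged into one kernel-verified Lean document; each statement's English description precedes it below -/
import Mathlib

section
/- Let X be a real Banach space, T : X ⇉ X* a maximal monotone operator, and h ∈ H_a(T). Then the family L(h), ordered by the pointwise order, has a minimal element. -/
/- Setting: `X` is a real Banach space, `NormedSpace.Dual ℝ X` its topological dual.
A point-to-set operator `T : X ⇉ X*` is identified with its graph,
a subset of `X × NormedSpace.Dual ℝ X`.  Extended-real-valued functions
(`ℝ ∪ {+∞}`) are modelled by `EReal`. -/

noncomputable section

variable {X : Type*} [NormedAddCommGroup X] [NormedSpace ℝ X]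

/-- The duality pairing `⟨x, x*⟩ = x*(x)` of a pair `p = (x, x*)`. -/
def pairingFn (p : X × StrongDual ℝ X) : ℝ := p.2 p.1

/-- Convexity for extended-real-valued functions. -/
def EConvexOn {E : Type*} [AddCommMonoid E] [Module ℝ E] (h : E → EReal) : Prop :=
  ∀ p q : E, ∀ a b : ℝ, 0 ≤ a → 0 ≤ b → a + b = 1 →
    h (a • p + b • q) ≤ (a : EReal) * h p + (b : EReal) * h q

/-- `T` is a monotone operator: `⟨x - y, x* - y*⟩ ≥ 0` on the graph. -/
def MonotoneOp (T : Set (X × StrongDual ℝ X)) : Prop :=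
  ∀ p ∈ T, ∀ q ∈ T, 0 ≤ (p.2 - q.2) (p.1 - q.1)

/-- `T` is maximal monotone. -/
def MaximalMonotoneOp (T : Set (X × StrongDual ℝ X)) : Prop :=
  MonotoneOp T ∧
    ∀ p : X × StrongDual ℝ X, (∀ q ∈ T, 0 ≤ (p.2 - q.2) (p.1 - q.1)) → p ∈ T

/-- The transform `J h (x, x*) = sup_{(y, y*)} ⟨x, y*⟩ + ⟨y, x*⟩ - h (y, y*)`,
i.e. `J h (x, x*) = h* (x*, x)` via the canonical injection `X ↪ X**`. -/
def JT (h : X × StrongDual ℝ X → EReal) : X × StrongDual ℝ X → EReal :=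
  fun p => ⨆ q : X × StrongDual ℝ X, (((q.2 p.1 + p.2 q.1 : ℝ) : EReal) - h q)

/-- The family `H(T)` of convex lower semicontinuous functions on `X × X*`
majorizing the duality product and coinciding with it on `T`. -/
def HT (T : Set (X × StrongDual ℝ X)) : Set (X × StrongDual ℝ X → EReal) :=
  { h | EConvexOn h ∧ LowerSemicontinuous h ∧
      (∀ p : X × StrongDual ℝ X, (pairingFn p : EReal) ≤ h p) ∧
      (∀ p ∈ T, h p = (pairingFn p : EReal)) }

/-- The subfamily `H_a(T) = { h ∈ H(T) | h ≥ J h }`. -/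
def Ha (T : Set (X × StrongDual ℝ X)) : Set (X × StrongDual ℝ X → EReal) :=
  { h | h ∈ HT T ∧ JT h ≤ h }

/-- For `h ∈ H(T)`, the family `L(h) = { g ∈ H(T) | h ≥ g ≥ J g }`. -/
def Lfam (T : Set (X × StrongDual ℝ X)) (h : X × StrongDual ℝ X → EReal) :
    Set (X × StrongDual ℝ X → EReal) :=
  { g | g ∈ HT T ∧ g ≤ h ∧ JT g ≤ g }

/-- The Fenchel–Legendre conjugate `f*(x*) = sup_x ⟨x, x*⟩ - f x`. -/
def fconj (f : X → EReal) : StrongDual ℝ X → EReal :=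
  fun x' => ⨆ x : X, (((x' x : ℝ) : EReal) - f x)

/-- The `ε`-subdifferential:
`∂_ε f (x) = { x* | f y ≥ f x + ⟨y - x, x*⟩ - ε for all y }`. -/
def epsSubdiff (f : X → EReal) (ε : ℝ) (x : X) : Set (StrongDual ℝ X) :=
  { x' | ∀ y : X, f x + ((x' (y - x) - ε : ℝ) : EReal) ≤ f y }

/-- The graph of the subdifferential `∂f = ∂_0 f`. -/
def subdiffGraph (f : X → EReal) : Set (X × StrongDual ℝ X) :=
  { p | p.2 ∈ epsSubdiff f 0 p.1 }

/-- The `ε`-enlargement `T^ε (x) = { x* | ⟨x - y, x* - y*⟩ ≥ -ε for all (y, y*) ∈ T }`. -/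
def enl (T : Set (X × StrongDual ℝ X)) (ε : ℝ) (x : X) :
    Set (StrongDual ℝ X) :=
  { x' | ∀ q ∈ T, -ε ≤ (x' - q.2) (x - q.1) }

/-- The Fitzpatrick function
`φ_T (x, x*) = sup_{(y, y*) ∈ T} ⟨x, y*⟩ + ⟨y, x*⟩ - ⟨y, y*⟩`. -/
def fitz (T : Set (X × StrongDual ℝ X)) : X × StrongDual ℝ X → EReal :=
  fun p => ⨆ q ∈ T, ((q.2 p.1 + p.2 q.1 - q.2 q.1 : ℝ) : EReal)


section AuxLemmas

variable {X : Type*} [NormedAddCommGroup X] [NormedSpace ℝ X]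

private lemma ekey (a : ℝ) (x : EReal) : (a : EReal) - ((a : EReal) - x) = x := by
  induction x using EReal.rec with
  | bot => simp
  | coe r => norm_cast; ring
  | top => simp

private lemma coe_sub_anti (a : ℝ) {x y : EReal} (h : x ≤ y) :
    (a : EReal) - y ≤ (a : EReal) - x :=
  EReal.sub_le_sub le_rfl h

private lemma coe_sub_iInf_le {ι : Sort*} (a : ℝ) (f : ι → EReal) (Z : EReal)
    (h : ∀ i, (a : EReal) - f i ≤ Z) : (a : EReal) - ⨅ i, f i ≤ Z := by
  have h1 : (a : EReal) - Z ≤ ⨅ i, f i := le_iInf fun i => by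
    have := coe_sub_anti a (h i); rwa [ekey] at this
  have := coe_sub_anti a h1
  rwa [ekey] at this

private lemma JT_antitone {f g : X × StrongDual ℝ X → EReal} (hfg : f ≤ g) :
    JT g ≤ JT f := by
  intro p
  exact iSup_mono fun q => EReal.sub_le_sub le_rfl (hfg q)

private lemma JT_JT_le (f : X × StrongDual ℝ X → EReal) : JT (JT f) ≤ f := by
  intro p
  refine iSup_le fun q => ?_
  have h1 : ((p.2 q.1 + q.2 p.1 : ℝ) : EReal) - f p ≤ JT f q :=
    le_iSup (fun r : X × StrongDual ℝ X =>
      ((r.2 q.1 + q.2 r.1 : ℝ) : EReal) - f r) p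
  have h2 : ((q.2 p.1 + p.2 q.1 : ℝ) : EReal) - JT f q ≤
      ((q.2 p.1 + p.2 q.1 : ℝ) : EReal) - (((p.2 q.1 + q.2 p.1 : ℝ) : EReal) - f p) :=
    EReal.sub_le_sub le_rfl h1
  have h3 : (p.2 q.1 + q.2 p.1 : ℝ) = (q.2 p.1 + p.2 q.1 : ℝ) := by ring
  rw [h3, ekey] at h2
  exact h2

private lemma escal (a b u v : ℝ) (ha : 0 ≤ a) (hb : 0 ≤ b) (hab : a + b = 1) (c : EReal) :
    ((a * u + b * v : ℝ) : EReal) - c ≤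
      (a : EReal) * (((u : ℝ) : EReal) - c) + (b : EReal) * (((v : ℝ) : EReal) - c) := by
  induction c using EReal.rec with
  | top => simp
  | coe r =>
    rw [← EReal.coe_sub, ← EReal.coe_sub, ← EReal.coe_sub, ← EReal.coe_mul, ← EReal.coe_mul,
      ← EReal.coe_add, EReal.coe_le_coe_iff]
    have h' : a * r + b * r = r := by rw [← add_mul, hab, one_mul]
    linarith
  | bot =>
    rw [EReal.coe_sub_bot, EReal.coe_sub_bot, EReal.coe_sub_bot]
    rcases eq_or_lt_of_le ha with h0 | hapos
    · have hb1 : b = 1 := by linarith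
      rw [← h0, hb1]
      simp
    · rw [EReal.coe_mul_top_of_pos hapos]
      rcases eq_or_lt_of_le hb with hb0 | hbpos
      · rw [← hb0]; simp
      · rw [EReal.coe_mul_top_of_pos hbpos]; simp

private lemma econvexOn_JT (f : X × StrongDual ℝ X → EReal) : EConvexOn (JT f) := by
  intro p q a b ha hb hab
  simp only [JT]
  refine iSup_le fun r => ?_
  have hcalc : (r.2 (a • p + b • q).1 + (a • p + b • q).2 r.1 : ℝ)
      = a * (r.2 p.1 + p.2 r.1) + b * (r.2 q.1 + q.2 r.1) := by
    simp only [Prod.fst_add, Prod.smul_fst, Prod.snd_add, Prod.smul_snd, map_add, map_smul,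
      ContinuousLinearMap.add_apply, ContinuousLinearMap.smul_apply, smul_eq_mul]
    ring
  rw [hcalc]
  refine (escal a b _ _ ha hb hab (f r)).trans ?_
  refine add_le_add (mul_le_mul_of_nonneg_left ?_ (by exact_mod_cast ha))
    (mul_le_mul_of_nonneg_left ?_ (by exact_mod_cast hb))
  · exact le_iSup (fun r' : X × StrongDual ℝ X =>
      ((r'.2 p.1 + p.2 r'.1 : ℝ) : EReal) - f r') r
  · exact le_iSup (fun r' : X × StrongDual ℝ X =>
      ((r'.2 q.1 + q.2 r'.1 : ℝ) : EReal) - f r') r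

private lemma lsc_JT (f : X × StrongDual ℝ X → EReal) : LowerSemicontinuous (JT f) := by
  apply lowerSemicontinuous_iSup
  intro r
  have hcont : Continuous fun p : X × StrongDual ℝ X => (r.2 p.1 + p.2 r.1 : ℝ) :=
    (r.2.continuous.comp continuous_fst).add
      ((ContinuousLinearMap.apply ℝ ℝ r.1).continuous.comp continuous_snd)
  have key : ∀ c : EReal, LowerSemicontinuous
      fun p : X × StrongDual ℝ X => ((r.2 p.1 + p.2 r.1 : ℝ) : EReal) - c := by
    intro c
    induction c using EReal.rec with
    | bot =>
      simp only [EReal.coe_sub_bot]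
      exact lowerSemicontinuous_const
    | coe s =>
      have : Continuous fun p : X × StrongDual ℝ X =>
          ((r.2 p.1 + p.2 r.1 - s : ℝ) : EReal) :=
        continuous_coe_real_ereal.comp (hcont.sub continuous_const)
      simpa [EReal.coe_sub] using this.lowerSemicontinuous
    | top =>
      simp only [EReal.sub_top]
      exact lowerSemicontinuous_const
  exact key (f r)

private lemma zorn_min {α : Type*} [PartialOrder α] (s : Set α)
    (ih : ∀ c ⊆ s, IsChain (· ≤ ·) c → ∃ lb ∈ s, ∀ z ∈ c, lb ≤ z) :
    ∃ m, Minimal (· ∈ s) m := by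
  obtain ⟨m, hm⟩ := zorn_le₀ (α := αᵒᵈ) (show Set αᵒᵈ from s) (fun c hcs hc => by
    obtain ⟨lb, hlb, hlb2⟩ := ih c hcs (fun x hx y hy hxy => (hc hx hy hxy).symm)
    exact ⟨lb, hlb, hlb2⟩)
  exact ⟨m, hm.1, fun b hb hbm => hm.2 hb hbm⟩

end AuxLemmas

/-- for `h ∈ H_a(T)`, the family `L(h)` has a minimal element with respect
to the pointwise order. -/
theorem exists_minimal_in_L [CompleteSpace X]
    (T : Set (X × StrongDual ℝ X)) (hT : MaximalMonotoneOp T)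
    (h : X × StrongDual ℝ X → EReal) (hh : h ∈ Ha T) :
    ∃ h₀, Minimal (· ∈ Lfam T h) h₀ := by
  obtain ⟨hhH, hhJ⟩ := hh
  apply zorn_min
  intro c hcs hc
  rcases c.eq_empty_or_nonempty with rfl | hne
  · exact ⟨h, ⟨hhH, le_rfl, hhJ⟩, by simp⟩
  haveI : Nonempty c := hne.to_subtype
  set g : X × StrongDual ℝ X → EReal := fun p => ⨅ k : c, k.1 p with hgdef
  have hgle : ∀ k ∈ c, g ≤ k := fun k hk p => iInf_le (fun j : c => j.1 p) (⟨k, hk⟩ : c)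
  have hkH : ∀ k ∈ c, k ∈ HT T := fun k hk => (hcs hk).1
  have hkh : ∀ k ∈ c, k ≤ h := fun k hk => (hcs hk).2.1
  have hkJ : ∀ k ∈ c, JT k ≤ k := fun k hk => (hcs hk).2.2
  have hgT : ∀ q ∈ T, g q = (pairingFn q : EReal) := by
    intro q hq
    have hkq : ∀ k : c, k.1 q = (pairingFn q : EReal) := fun k => (hkH k k.2).2.2.2 q hq
    rw [hgdef]
    simp only [hkq]
    exact iInf_const
  -- `JT g ≤ g`
  have hJg : JT g ≤ g := by
    intro p
    refine iSup_le fun q => ?_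
    refine le_iInf fun j => ?_
    refine coe_sub_iInf_le _ (fun k : c => k.1 q) _ fun k => ?_
    have hterm : ((q.2 p.1 + p.2 q.1 : ℝ) : EReal) - k.1 q ≤ JT k.1 p :=
      le_iSup (fun q' : X × StrongDual ℝ X =>
        ((q'.2 p.1 + p.2 q'.1 : ℝ) : EReal) - k.1 q') q
    rcases eq_or_ne j.1 k.1 with hjk | hjk
    · exact hterm.trans ((hkJ k k.2 p).trans (le_of_eq (by rw [hjk])))
    rcases hc.total j.2 k.2 with hle | hle
    · exact hterm.trans ((JT_antitone hle p).trans (hkJ j j.2 p))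
    · exact hterm.trans ((hkJ k k.2 p).trans (hle p))
  have hJgJJg : JT g ≤ JT (JT g) := JT_antitone hJg
  have hJJg_le : JT (JT g) ≤ g := JT_JT_le g
  -- pairing ≤ JT g
  have hpair : ∀ p, ((pairingFn p : ℝ) : EReal) ≤ JT g p := by
    intro p
    by_cases hp : p ∈ T
    · have hterm : ((p.2 p.1 + p.2 p.1 : ℝ) : EReal) - g p ≤ JT g p :=
        le_iSup (fun q' : X × StrongDual ℝ X =>
          ((q'.2 p.1 + p.2 q'.1 : ℝ) : EReal) - g q') p
      rw [hgT p hp] at hterm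
      refine le_trans (le_of_eq ?_) hterm
      rw [← EReal.coe_sub, EReal.coe_eq_coe_iff]
      simp [pairingFn]
    · have hex : ∃ q ∈ T, (p.2 - q.2) (p.1 - q.1) < 0 := by
        by_contra hcon
        push_neg at hcon
        exact hp (hT.2 p fun q hq => hcon q hq)
      obtain ⟨q, hq, hlt⟩ := hex
      have hterm : ((q.2 p.1 + p.2 q.1 : ℝ) : EReal) - g q ≤ JT g p :=
        le_iSup (fun q' : X × StrongDual ℝ X =>
          ((q'.2 p.1 + p.2 q'.1 : ℝ) : EReal) - g q') q
      rw [hgT q hq] at hterm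
      refine le_trans ?_ hterm
      rw [← EReal.coe_sub, EReal.coe_le_coe_iff]
      have hexp : (p.2 - q.2) (p.1 - q.1)
          = p.2 p.1 - p.2 q.1 - q.2 p.1 + q.2 q.1 := by
        simp [ContinuousLinearMap.sub_apply, map_sub]
        ring
      simp only [pairingFn]
      rw [hexp] at hlt
      linarith
  refine ⟨JT (JT g), ⟨⟨econvexOn_JT _, lsc_JT _, ?_, ?_⟩, ?_, ?_⟩, ?_⟩
  · exact fun p => (hpair p).trans (hJgJJg p)
  · intro q hq
    exact le_antisymm ((hJJg_le q).trans (le_of_eq (hgT q hq)))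
      ((hpair q).trans (hJgJJg q))
  · obtain ⟨k, hk⟩ := hne
    exact hJJg_le.trans ((hgle k hk).trans (hkh k hk))
  · exact (JT_JT_le (JT g)).trans hJgJJg
  · exact fun z hz => hJJg_le.trans (hgle z hz)
end
end

section
/- Let X be a real Banach space and T : X ⇉ X* a maximal monotone operator. Then σ_T ≥ J σ_T pointwise, where σ_T := sup_{h ∈ H(T)} h; that is, σ_T ∈ H_a(T). -/
/- Setting: `X` is a real Banach space, `StrongDual ℝ X` its topological dual.
A point-to-set operator `T : X ⇉ X*` is identified with its graph,
a subset of `X × StrongDual ℝ X`.  Extended-real-valued functions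
(`ℝ ∪ {+∞}`) are modelled by `EReal`. -/

noncomputable section

variable {X : Type*} [NormedAddCommGroup X] [NormedSpace ℝ X]

lemma ereal_mul_mono {a : ℝ} (ha : 0 ≤ a) {x y : EReal} (h : x ≤ y) :
    (a : EReal) * x ≤ (a : EReal) * y :=
  mul_le_mul_of_nonneg_left h (by exact_mod_cast ha)

lemma econvexOn_iSup {E : Type*} [AddCommMonoid E] [Module ℝ E] {ι : Sort*}
    (f : ι → E → EReal) (hf : ∀ i, EConvexOn (f i)) :
    EConvexOn (fun p => ⨆ i, f i p) := by
  intro p q a b ha hb hab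
  refine iSup_le fun i => (hf i p q a b ha hb hab).trans ?_
  exact add_le_add (ereal_mul_mono ha (le_iSup (fun i => f i p) i))
    (ereal_mul_mono hb (le_iSup (fun i => f i q) i))

lemma econvexOn_affine {E : Type*} [AddCommMonoid E] [Module ℝ E]
    (L : E → ℝ) (d : EReal)
    (hL : ∀ (p q : E) (a b : ℝ), L (a • p + b • q) = a * L p + b * L q) :
    EConvexOn (fun p => (L p : EReal) + d) := by
  intro p q a b ha hb hab
  simp only [hL p q a b]
  induction d with
  | bot => simp [EReal.add_bot]
  | coe d =>
      refine le_of_eq ?_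
      have h2 : a * L p + b * L q + d = a * (L p + d) + b * (L q + d) := by
        linear_combination (-d) * hab
      calc ((a * L p + b * L q : ℝ) : EReal) + ((d : ℝ) : EReal)
          = ((a * (L p + d) + b * (L q + d) : ℝ) : EReal) := by rw [← EReal.coe_add, h2]
        _ = (a : EReal) * ((L p : ℝ) + (d : ℝ) : EReal) + (b : EReal) * ((L q : ℝ) + (d : ℝ) : EReal) := by
            simp only [EReal.coe_add, EReal.coe_mul]
  | top =>
      have hR : (a : EReal) * ((L p : ℝ) + (⊤ : EReal)) + (b : EReal) * ((L q : ℝ) + (⊤ : EReal)) = ⊤ := by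
        rw [EReal.coe_add_top, EReal.coe_add_top]
        rcases ha.eq_or_lt with h | h
        · have hb1 : b = 1 := by linarith
          rw [← h, hb1]
          simp [EReal.coe_zero, EReal.coe_one, EReal.zero_mul]
        · rw [EReal.coe_mul_top_of_pos h]
          refine EReal.top_add_of_ne_bot ?_
          rcases hb.eq_or_lt with h' | h'
          · rw [← h']; simp [EReal.coe_zero, EReal.zero_mul]
          · rw [EReal.coe_mul_top_of_pos h']; simp
      rw [hR]; exact le_top

lemma lsc_affine {E : Type*} [TopologicalSpace E] (L : E → ℝ) (hL : Continuous L)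
    (d : EReal) : LowerSemicontinuous (fun p => (L p : EReal) + d) := by
  induction d with
  | bot =>
      have : (fun p : E => (L p : EReal) + ⊥) = fun _ => (⊥ : EReal) := by
        funext p; exact EReal.add_bot _
      rw [this]; exact lowerSemicontinuous_const
  | coe d =>
      have hc : Continuous fun p : E => ((L p + d : ℝ) : EReal) :=
        continuous_coe_real_ereal.comp (hL.add continuous_const)
      have : (fun p : E => (L p : EReal) + (d : ℝ)) = fun p => ((L p + d : ℝ) : EReal) := by
        funext p; rw [EReal.coe_add]
      rw [this]; exact hc.lowerSemicontinuous
  | top =>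
      have : (fun p : E => (L p : EReal) + ⊤) = fun _ => (⊤ : EReal) := by
        funext p; exact EReal.coe_add_top _
      rw [this]; exact lowerSemicontinuous_const

lemma coe_sub_le_coe {r s : ℝ} {x : EReal} (hx : ((r - s : ℝ) : EReal) ≤ x) :
    (r : EReal) - x ≤ (s : EReal) := by
  induction x with
  | bot =>
      rw [le_bot_iff] at hx
      exact (EReal.coe_ne_bot _ hx).elim
  | coe t =>
      replace hx : r - s ≤ t := EReal.coe_le_coe_iff.mp hx
      have h1 : (r : EReal) - (t : EReal) = ((r - t : ℝ) : EReal) := (EReal.coe_sub r t).symm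
      rw [h1, EReal.coe_le_coe_iff]
      linarith
  | top =>
      rw [sub_eq_add_neg, EReal.neg_top, EReal.add_bot]
      exact bot_le

def cop (q p : X × StrongDual ℝ X) : ℝ := q.2 p.1 + p.2 q.1

lemma cop_affine (q p r : X × StrongDual ℝ X) (a b : ℝ) :
    cop q (a • p + b • r) = a * cop q p + b * cop q r := by
  simp only [cop, Prod.fst_add, Prod.snd_add, Prod.smul_fst, Prod.smul_snd, map_add, map_smul,
    ContinuousLinearMap.add_apply, ContinuousLinearMap.smul_apply, smul_eq_mul]
  ring

lemma cop_cont (q : X × StrongDual ℝ X) :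
    Continuous fun p : X × StrongDual ℝ X => cop q p :=
  (q.2.continuous.comp continuous_fst).add
    (((ContinuousLinearMap.apply ℝ ℝ q.1).continuous).comp continuous_snd)


section MainAux

variable {X : Type*} [NormedAddCommGroup X] [NormedSpace ℝ X]

lemma fitz_le_pairing_onT {T : Set (X × StrongDual ℝ X)} (hT : MonotoneOp T)
    {p : X × StrongDual ℝ X} (hp : p ∈ T) : fitz T p ≤ ((pairingFn p : ℝ) : EReal) := by
  refine iSup₂_le fun q hq => EReal.coe_le_coe_iff.mpr ?_
  have h0 := hT p hp q hq
  simp only [ContinuousLinearMap.sub_apply, map_sub] at h0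
  unfold pairingFn
  linarith

lemma pairing_le_fitz {T : Set (X × StrongDual ℝ X)} (hT : MaximalMonotoneOp T)
    (p : X × StrongDual ℝ X) : ((pairingFn p : ℝ) : EReal) ≤ fitz T p := by
  by_cases hp : ∀ q ∈ T, 0 ≤ (p.2 - q.2) (p.1 - q.1)
  · have hpT : p ∈ T := hT.2 p hp
    refine le_iSup₂_of_le p hpT (EReal.coe_le_coe_iff.mpr ?_)
    unfold pairingFn; linarith
  · push_neg at hp
    obtain ⟨q, hq, hlt⟩ := hp
    refine le_iSup₂_of_le q hq (EReal.coe_le_coe_iff.mpr ?_)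
    simp only [ContinuousLinearMap.sub_apply, map_sub] at hlt
    unfold pairingFn
    linarith

lemma fitz_on_T {T : Set (X × StrongDual ℝ X)} (hT : MaximalMonotoneOp T)
    {p : X × StrongDual ℝ X} (hp : p ∈ T) : fitz T p = ((pairingFn p : ℝ) : EReal) :=
  le_antisymm (fitz_le_pairing_onT hT.1 hp) (pairing_le_fitz hT p)

lemma fitz_mem_HT {T : Set (X × StrongDual ℝ X)} (hT : MaximalMonotoneOp T) :
    fitz T ∈ HT T := by
  refine ⟨?_, ?_, pairing_le_fitz hT, fun p hp => fitz_on_T hT hp⟩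
  · have : fitz T = fun p => ⨆ q, ⨆ _ : q ∈ T,
        ((cop q p : ℝ) : EReal) + ((-(pairingFn q) : ℝ) : EReal) := by
      funext p
      refine iSup_congr fun q => iSup_congr fun _ => ?_
      rw [← EReal.coe_add]
      congr 1
      try simp only [cop, pairingFn]
      try ring
    rw [this]
    refine econvexOn_iSup _ fun q => econvexOn_iSup _ fun _ => ?_
    exact econvexOn_affine (cop q) _ (fun p r a b => cop_affine q p r a b)
  · refine lowerSemicontinuous_biSup fun q hq => ?_
    exact (continuous_coe_real_ereal.comp
      ((cop_cont q).sub (continuous_const))).lowerSemicontinuous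

lemma JT_eq (h : X × StrongDual ℝ X → EReal) :
    JT h = fun p => ⨆ q, (((cop q p : ℝ) : EReal) + (-(h q))) := by
  funext p
  exact iSup_congr fun q => sub_eq_add_neg _ _

lemma JT_antitone_s6 {h h' : X × StrongDual ℝ X → EReal} (hle : h ≤ h') :
    JT h' ≤ JT h := fun p =>
  iSup_mono fun q => EReal.sub_le_sub le_rfl (hle q)

lemma JT_fitz_mem_HT {T : Set (X × StrongDual ℝ X)} (hT : MaximalMonotoneOp T) :
    JT (fitz T) ∈ HT T := by
  have hfge : fitz T ≤ JT (fitz T) := by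
    intro p
    refine iSup₂_le fun q hq => le_iSup_of_le q ?_
    rw [fitz_on_T hT hq, ← EReal.coe_sub]
    refine le_of_eq ?_
    congr 1
    try simp only [cop, pairingFn]
  refine ⟨?_, ?_, fun p => (pairing_le_fitz hT p).trans (hfge p), fun p hp => ?_⟩
  · rw [JT_eq]
    exact econvexOn_iSup _ fun q =>
      econvexOn_affine (cop q) _ (fun p r a b => cop_affine q p r a b)
  · rw [JT_eq]
    exact lowerSemicontinuous_iSup fun q => lsc_affine (cop q) (cop_cont q) _
  · refine le_antisymm ?_ ((pairing_le_fitz hT p).trans (hfge p))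
    refine iSup_le fun q => ?_
    refine coe_sub_le_coe ?_
    refine le_iSup₂_of_le p hp (le_of_eq ?_)
    congr 1
    try simp only [cop, pairingFn]
    try ring

end MainAux

/-- `σ_T = sup_{h ∈ H(T)} h` satisfies `σ_T ≥ J σ_T` pointwise,
that is, `σ_T ∈ H_a(T)`. -/
theorem sigma_mem_Ha [CompleteSpace X]
    (T : Set (X × StrongDual ℝ X)) (hT : MaximalMonotoneOp T) :
    JT (fun p => ⨆ h ∈ HT T, h p) ≤ (fun p => ⨆ h ∈ HT T, h p) ∧
      (fun p => ⨆ h ∈ HT T, h p) ∈ Ha T := by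
  set σ : X × StrongDual ℝ X → EReal := fun p => ⨆ h ∈ HT T, h p with hσ
  have hfitz := fitz_mem_HT hT
  have hJfitz := JT_fitz_mem_HT hT
  have hle_of_mem : ∀ h ∈ HT T, h ≤ σ := fun h hh p =>
    le_iSup₂_of_le h hh le_rfl
  have hσHT : σ ∈ HT T := by
    refine ⟨?_, ?_, ?_, ?_⟩
    · exact econvexOn_iSup _ fun h => econvexOn_iSup _ fun hh => hh.1
    · exact lowerSemicontinuous_biSup fun h hh => hh.2.1
    · exact fun p => (hfitz.2.2.1 p).trans (hle_of_mem _ hfitz p)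
    · intro p hp
      refine le_antisymm (iSup₂_le fun h hh => le_of_eq (hh.2.2.2 p hp)) ?_
      exact (hfitz.2.2.1 p).trans (hle_of_mem _ hfitz p)
  have hmain : JT σ ≤ σ :=
    (JT_antitone_s6 (hle_of_mem _ hfitz)).trans (hle_of_mem _ hJfitz)
  exact ⟨hmain, hσHT, hmain⟩
end
end
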